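/- A continuous map f : [0,1] → [0,1] has no wandering intervals if and only if the set Z_f = {x ∈ [0,1] : ω(x) is a periodic orbit} is dense in [0,1]. -/

import Mathlib

open Set Function Filter

/-- ω-limit set of a point under iteration of `f`. -/
def omegaSet (f : ℝ → ℝ) (x : ℝ) : Set ℝ :=
  omegaLimit atTop (fun n : ℕ => f^[n]) {x}

/-- `ω(x)` is a cycle (periodic orbit) of `f`. -/
def TendsToCycle (f : ℝ → ℝ) (x : ℝ) : Prop :=
  ∃ p : ℝ, p ∈ Icc (0:ℝ) 1 ∧ (∃ n : ℕ, 0 < n ∧ f^[n] p = p) ∧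
    omegaSet f x = Set.range fun i : ℕ => f^[i] p

/-- `J` is a wandering interval of `f` in `[0,1]`. -/
def WanderingInterval (f : ℝ → ℝ) (J : Set ℝ) : Prop :=
  J ⊆ Icc 0 1 ∧ J.OrdConnected ∧ J.Nontrivial ∧
    (∀ m n : ℕ, m < n → Disjoint (f^[m] '' J) (f^[n] '' J)) ∧
    ∀ x ∈ J, ¬ TendsToCycle f x

lemma mem_omegaSet_iff (f : ℝ → ℝ) (x z : ℝ) :
    z ∈ omegaSet f x ↔ ∀ U ∈ nhds z, ∃ᶠ n in atTop, f^[n] x ∈ U := by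
  rw [omegaSet, mem_omegaLimit_singleton_iff_map_cluster_point, mapClusterPt_iff_frequently]

lemma freq_shift {P : ℕ → Prop} (m : ℕ) :
    (∃ᶠ n in atTop, P (n + m)) ↔ ∃ᶠ n in atTop, P n := by
  rw [frequently_atTop, frequently_atTop]
  constructor
  · intro h N
    obtain ⟨n, hn, hP⟩ := h N
    exact ⟨n + m, le_trans hn (Nat.le_add_right n m), hP⟩
  · intro h N
    obtain ⟨n, hn, hP⟩ := h (N + m)
    exact ⟨n - m, by omega, by rwa [show n - m + m = n by omega]⟩

lemma omegaSet_iterate (f : ℝ → ℝ) (x : ℝ) (m : ℕ) :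
    omegaSet f (f^[m] x) = omegaSet f x := by
  ext z
  rw [mem_omegaSet_iff, mem_omegaSet_iff]
  refine forall₂_congr fun U hU => ?_
  have h : ∀ n : ℕ, f^[n] (f^[m] x) = f^[n + m] x := fun n =>
    (Function.iterate_add_apply f n m x).symm
  constructor
  · intro hfreq
    exact (freq_shift m).mp (hfreq.mono fun n hn => by rwa [h n] at hn)
  · intro hfreq
    exact ((freq_shift m).mpr hfreq).mono fun n hn => by rwa [h n]

lemma contOn_iterate {f : ℝ → ℝ} (hf : ContinuousOn f (Icc 0 1))
    (hmaps : MapsTo f (Icc 0 1) (Icc 0 1)) (n : ℕ) :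
    ContinuousOn f^[n] (Icc (0:ℝ) 1) := by
  induction n with
  | zero => simpa using continuousOn_id
  | succ k ih =>
      rw [Function.iterate_succ]
      exact ih.comp hf hmaps

-- F4: asymptotically periodic orbits tend to a cycle
lemma tendsToCycle_of_tendsto {f : ℝ → ℝ} (hf : ContinuousOn f (Icc 0 1))
    (hmaps : MapsTo f (Icc 0 1) (Icc 0 1)) {y ℓ : ℝ} {m p : ℕ}
    (hy : y ∈ Icc (0:ℝ) 1) (hp : 0 < p) (hℓ : ℓ ∈ Icc (0:ℝ) 1)
    (hper : f^[p] ℓ = ℓ)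
    (htend : Tendsto (fun k : ℕ => f^[m + k * p] y) atTop (nhds ℓ)) :
    TendsToCycle f y := by
  have hiter : ∀ n : ℕ, MapsTo f^[n] (Icc (0:ℝ) 1) (Icc (0:ℝ) 1) := fun n => hmaps.iterate n
  have hin : ∀ k : ℕ, f^[m + k * p] y ∈ Icc (0:ℝ) 1 := fun k => hiter _ hy
  have htend' : Tendsto (fun k : ℕ => f^[m + k * p] y) atTop (nhdsWithin ℓ (Icc 0 1)) :=
    tendsto_nhdsWithin_iff.mpr ⟨htend, Eventually.of_forall hin⟩
  have hs1 : ∀ i : ℕ, Tendsto (fun k : ℕ => f^[m + k * p + i] y) atTop (nhds (f^[i] ℓ)) := by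
    intro i
    have hc : Tendsto (fun k : ℕ => f^[i] (f^[m + k * p] y)) atTop (nhds (f^[i] ℓ)) :=
      (contOn_iterate hf hmaps i ℓ hℓ).tendsto.comp htend'
    refine hc.congr fun k => ?_
    have h1 : f^[i + (m + k * p)] y = f^[i] (f^[m + k * p] y) :=
      Function.iterate_add_apply f i (m + k * p) y
    rw [← h1, show i + (m + k * p) = m + k * p + i by omega]
  refine ⟨ℓ, hℓ, ⟨p, hp, hper⟩, ?_⟩
  ext z
  rw [mem_omegaSet_iff]
  constructor
  · intro hz
    by_contra hzr
    have hne : ∀ i : ℕ, z ≠ f^[i] ℓ := fun i h => hzr ⟨i, h.symm⟩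
    have hpne : (Finset.range p).Nonempty := Finset.nonempty_range_iff.mpr hp.ne'
    set δ : ℝ := (Finset.range p).inf' hpne (fun i => |z - f^[i] ℓ|) with hδ
    have hδpos : 0 < δ := by
      rw [hδ, Finset.lt_inf'_iff]
      intro i _
      exact abs_pos.mpr (sub_ne_zero.mpr (hne i))
    have hev : ∀ᶠ k in atTop, ∀ i ∈ Finset.range p, |f^[m + k * p + i] y - f^[i] ℓ| < δ / 2 := by
      rw [eventually_all_finset]
      intro i _
      exact (hs1 i).eventually (eventually_abs_sub_lt (f^[i] ℓ) (by linarith : (0:ℝ) < δ / 2))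
    obtain ⟨K, hK⟩ := eventually_atTop.mp hev
    have hball : Metric.ball z (δ / 2) ∈ nhds z := Metric.ball_mem_nhds z (by linarith)
    obtain ⟨n, hn, hnball⟩ := frequently_atTop.mp (hz _ hball) (m + (K + 1) * p)
    have hnm : m ≤ n := le_trans (Nat.le_add_right m _) hn
    set q := (n - m) / p with hq
    set i := (n - m) % p with hi
    have hdm : p * q + i = n - m := Nat.div_add_mod (n - m) p
    have hilt : i < p := Nat.mod_lt _ hp
    have hqK : K ≤ q := by
      have h1 : (K + 1) * p ≤ n - m := by omega
      have := (Nat.le_div_iff_mul_le hp).mpr h1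
      omega
    have hnd : n = m + q * p + i := by
      have := Nat.mul_comm p q
      omega
    have h2 : |f^[n] y - f^[i] ℓ| < δ / 2 := by
      rw [hnd]
      exact hK q hqK i (Finset.mem_range.mpr hilt)
    have h3 : |f^[n] y - z| < δ / 2 := by
      have := Metric.mem_ball.mp hnball
      rwa [Real.dist_eq] at this
    have h4 : δ ≤ |z - f^[i] ℓ| := Finset.inf'_le _ (Finset.mem_range.mpr hilt)
    have h5 : |z - f^[i] ℓ| ≤ |z - f^[n] y| + |f^[n] y - f^[i] ℓ| := abs_sub_le _ _ _
    rw [abs_sub_comm] at h3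
    linarith
  · rintro ⟨i, rfl⟩
    intro U hU
    have hev : ∀ᶠ k in atTop, f^[m + k * p + i] y ∈ U := (hs1 i).eventually_mem hU
    obtain ⟨K, hK⟩ := eventually_atTop.mp hev
    rw [frequently_atTop]
    intro N
    refine ⟨m + (max K N) * p + i, ?_, hK _ (le_max_left _ _)⟩
    have h1 : N ≤ max K N * p :=
      le_trans (le_max_right K N) (Nat.le_mul_of_pos_right _ hp)
    omega

-- F6 : interval self-map with no interior fixed points: every orbit converges to a fixed point
lemma converges_of_no_interior_fixed {g : ℝ → ℝ} {c d : ℝ} (hcd : c < d)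
    (hgc : ContinuousOn g (Icc c d)) (hmap : MapsTo g (Icc c d) (Icc c d))
    (hfix : ∀ t ∈ Ioo c d, g t ≠ t) {x : ℝ} (hx : x ∈ Icc c d) :
    ∃ ℓ ∈ Icc c d, g ℓ = ℓ ∧ Tendsto (fun k : ℕ => g^[k] x) atTop (nhds ℓ) := by
  have hcont : ∀ t ∈ Icc c d, ContinuousWithinAt (fun s => g s - s) (Icc c d) t := fun t ht =>
    ((hgc t ht).sub continuousWithinAt_id)
  -- sign dichotomy
  have hsign : (∀ t ∈ Ioo c d, t < g t) ∨ (∀ t ∈ Ioo c d, g t < t) := by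
    by_contra hcon
    push_neg at hcon
    obtain ⟨⟨t1, ht1, ht1'⟩, ⟨t2, ht2, ht2'⟩⟩ := hcon
    have h1 : g t1 < t1 := lt_of_le_of_ne ht1' (hfix t1 ht1)
    have h2 : t2 < g t2 := lt_of_le_of_ne ht2' (fun h => hfix t2 ht2 h.symm)
    have key : ∀ a b : ℝ, a ∈ Ioo c d → b ∈ Ioo c d → g a < a → b < g b → False := by
      intro a b ha hb hga hgb
      have hsub : uIcc a b ⊆ Ioo c d := by
        rw [uIcc_eq_union]
        exact union_subset (Icc_subset_Ioo ha.1 hb.2) (Icc_subset_Ioo hb.1 ha.2)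
      have hsub2 : uIcc a b ⊆ Icc c d := hsub.trans Ioo_subset_Icc_self
      have hcont' : ContinuousOn (fun s => g s - s) (uIcc a b) :=
        fun t ht => (hcont t (hsub2 ht)).mono hsub2
      have h0 : (0:ℝ) ∈ uIcc (g a - a) (g b - b) :=
        mem_uIcc.mpr (Or.inl ⟨by linarith, by linarith⟩)
      obtain ⟨t, ht, hteq⟩ := intermediate_value_uIcc hcont' h0
      have hgt : g t = t := by
        have : g t - t = 0 := hteq
        linarith
      exact hfix t (hsub ht) hgt
    exact key t1 t2 ht1 ht2 h1 h2
  set u : ℕ → ℝ := fun k => g^[k] x with hu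
  have hmem : ∀ k, u k ∈ Icc c d := by
    intro k
    induction k with
    | zero => simpa [hu] using hx
    | succ j ih =>
        show g^[j + 1] x ∈ Icc c d
        rw [Function.iterate_succ_apply']
        exact hmap ih
  have hsucc : ∀ k, u (k + 1) = g (u k) := fun k => Function.iterate_succ_apply' g k x
  rcases hsign with hup | hdown
  · -- increasing case
    have hgd : g d = d := by
      have hdm : d ∈ Icc c d := right_mem_Icc.mpr hcd.le
      have hd : d ∈ closure (Ioo c d) := by
        rw [closure_Ioo hcd.ne]; exact hdm
      have hne : (nhdsWithin d (Ioo c d)).NeBot := mem_closure_iff_nhdsWithin_neBot.mp hd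
      have htd : Tendsto (fun s => g s - s) (nhdsWithin d (Ioo c d)) (nhds (g d - d)) :=
        ((hcont d hdm).mono Ioo_subset_Icc_self)
      have hpos : ∀ᶠ s in nhdsWithin d (Ioo c d), 0 ≤ g s - s :=
        eventually_mem_nhdsWithin.mono (fun s hs => by linarith [hup s hs])
      have h0 : 0 ≤ g d - d := ge_of_tendsto htd hpos
      have h1 : g d ≤ d := (hmap hdm).2
      linarith
    have hstep : ∀ t ∈ Icc c d, t ≤ g t := by
      intro t ht
      rcases eq_or_lt_of_le ht.2 with h | h
      · rw [h, hgd]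
      · rcases eq_or_lt_of_le ht.1 with h' | h'
        · exact h' ▸ (hmap ht).1
        · exact le_of_lt (hup t ⟨h', h⟩)
    have hmono : Monotone u := monotone_nat_of_le_succ fun k => by
      rw [hsucc k]; exact hstep _ (hmem k)
    have hbdd : BddAbove (range u) := ⟨d, by rintro _ ⟨k, rfl⟩; exact (hmem k).2⟩
    have htend : Tendsto u atTop (nhds (⨆ k, u k)) := tendsto_atTop_ciSup hmono hbdd
    set ℓ := ⨆ k, u k with hℓdef
    have hℓmem : ℓ ∈ Icc c d := by
      constructor
      · exact le_trans (hmem 0).1 (le_ciSup hbdd 0)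
      · exact ciSup_le fun k => (hmem k).2
    refine ⟨ℓ, hℓmem, ?_, htend⟩
    have h1 : Tendsto (fun k => u (k + 1)) atTop (nhds ℓ) :=
      htend.comp (tendsto_add_atTop_nat 1)
    have h2 : Tendsto (fun k => g (u k)) atTop (nhds (g ℓ)) :=
      (hgc ℓ hℓmem).tendsto.comp (tendsto_nhdsWithin_iff.mpr ⟨htend, Eventually.of_forall hmem⟩)
    have h3 : Tendsto (fun k => u (k + 1)) atTop (nhds (g ℓ)) := h2.congr fun k => (hsucc k).symm
    exact (tendsto_nhds_unique h3 h1)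
  · -- decreasing case
    have hgc' : g c = c := by
      have hcm : c ∈ Icc c d := left_mem_Icc.mpr hcd.le
      have hc : c ∈ closure (Ioo c d) := by
        rw [closure_Ioo hcd.ne]; exact hcm
      have hne : (nhdsWithin c (Ioo c d)).NeBot := mem_closure_iff_nhdsWithin_neBot.mp hc
      have htd : Tendsto (fun s => g s - s) (nhdsWithin c (Ioo c d)) (nhds (g c - c)) :=
        ((hcont c hcm).mono Ioo_subset_Icc_self)
      have hpos : ∀ᶠ s in nhdsWithin c (Ioo c d), g s - s ≤ 0 :=
        eventually_mem_nhdsWithin.mono (fun s hs => by linarith [hdown s hs])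
      have h0 : g c - c ≤ 0 := le_of_tendsto htd hpos
      have h1 : c ≤ g c := (hmap hcm).1
      linarith
    have hstep : ∀ t ∈ Icc c d, g t ≤ t := by
      intro t ht
      rcases eq_or_lt_of_le ht.1 with h | h
      · rw [← h, hgc']
      · rcases eq_or_lt_of_le ht.2 with h' | h'
        · exact h' ▸ (hmap ht).2
        · exact le_of_lt (hdown t ⟨h, h'⟩)
    have hmono : Antitone u := antitone_nat_of_succ_le fun k => by
      rw [hsucc k]; exact hstep _ (hmem k)
    have hbdd : BddBelow (range u) := ⟨c, by rintro _ ⟨k, rfl⟩; exact (hmem k).1⟩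
    have htend : Tendsto u atTop (nhds (⨅ k, u k)) := tendsto_atTop_ciInf hmono hbdd
    set ℓ := ⨅ k, u k with hℓdef
    have hℓmem : ℓ ∈ Icc c d := by
      constructor
      · exact le_ciInf fun k => (hmem k).1
      · exact le_trans (ciInf_le hbdd 0) (hmem 0).2
    refine ⟨ℓ, hℓmem, ?_, htend⟩
    have h1 : Tendsto (fun k => u (k + 1)) atTop (nhds ℓ) :=
      htend.comp (tendsto_add_atTop_nat 1)
    have h2 : Tendsto (fun k => g (u k)) atTop (nhds (g ℓ)) :=
      (hgc ℓ hℓmem).tendsto.comp (tendsto_nhdsWithin_iff.mpr ⟨htend, Eventually.of_forall hmem⟩)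
    have h3 : Tendsto (fun k => u (k + 1)) atTop (nhds (g ℓ)) := h2.congr fun k => (hsucc k).symm
    exact (tendsto_nhds_unique h3 h1)

lemma tendsToCycle_of_periodic {f : ℝ → ℝ} (hf : ContinuousOn f (Icc 0 1))
    (hmaps : MapsTo f (Icc 0 1) (Icc 0 1)) {q : ℝ} {p : ℕ}
    (hq : q ∈ Icc (0:ℝ) 1) (hp : 0 < p) (hper : f^[p] q = q) :
    TendsToCycle f q := by
  have hfix : Function.IsFixedPt f^[p] q := hper
  have hconst : ∀ k : ℕ, f^[0 + k * p] q = q := by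
    intro k
    rw [Nat.zero_add, Nat.mul_comm, Function.iterate_mul]
    exact hfix.iterate k
  exact tendsToCycle_of_tendsto hf hmaps hq hp hq hper
    (by rw [tendsto_congr hconst]; exact tendsto_const_nhds)

-- the key overlap lemma: if two distinct iterated images of an interval with no
-- points tending to cycles intersect, we get a contradiction.
lemma no_overlap {f : ℝ → ℝ} (hf : ContinuousOn f (Icc 0 1))
    (hmaps : MapsTo f (Icc 0 1) (Icc 0 1)) {a b : ℝ} {m n : ℕ}
    (hab : a < b) (hJ : Icc a b ⊆ Icc (0:ℝ) 1)
    (hJZ : ∀ x ∈ Icc a b, ¬ TendsToCycle f x) (hmn : m < n)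
    (hw : ((f^[m] '' Icc a b) ∩ (f^[n] '' Icc a b)).Nonempty) : False := by
  set p := n - m with hpdef
  have hp : 0 < p := by omega
  have hnp : n = m + p := by omega
  set K := f^[m] '' Icc a b with hK
  obtain ⟨w, ⟨y0, hy0, hwy0⟩, ⟨z0, hz0, hwz0⟩⟩ := hw
  by_cases hKs : K.Subsingleton
  · -- image is a single point, necessarily periodic
    have hmz : f^[m] z0 ∈ K := mem_image_of_mem _ hz0
    have hwK : w ∈ K := ⟨y0, hy0, hwy0⟩
    have hzw : f^[m] z0 = w := hKs hmz hwK
    have hgw : f^[p] w = w := by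
      rw [← hzw, ← Function.iterate_add_apply, show p + m = n by omega, hwz0]
      exact hzw.symm
    have hw01 : w ∈ Icc (0:ℝ) 1 := by
      rw [← hwy0]; exact hmaps.iterate m (hJ hy0)
    obtain ⟨q, hq1, hq2, hq3⟩ := tendsToCycle_of_periodic hf hmaps hw01 hp hgw
    refine hJZ y0 hy0 ⟨q, hq1, hq2, ?_⟩
    rw [← omegaSet_iterate f y0 m, hwy0, hq3]
  · have hKnt : K.Nontrivial := Set.not_subsingleton_iff.mp hKs
    set P : ℕ → Set ℝ := fun k => f^[m + k * p] '' Icc a b with hP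
    have hPconn : ∀ k, IsPreconnected (P k) := fun k =>
      isPreconnected_Icc.image _ ((contOn_iterate hf hmaps _).mono hJ)
    have hPmem : ∀ k t, t ∈ P k → ∃ y ∈ Icc a b, f^[m + k * p] y = t := fun k t ht => ht
    have hchain : ∀ k, (P k ∩ P (k + 1)).Nonempty := by
      intro k
      refine ⟨f^[k * p] w, ⟨y0, hy0, ?_⟩, ⟨z0, hz0, ?_⟩⟩
      · rw [Nat.add_comm m (k * p), Function.iterate_add_apply, hwy0]
      · have he : m + (k + 1) * p = k * p + n := by rw [Nat.add_mul, Nat.one_mul]; omega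
        rw [he, Function.iterate_add_apply, hwz0]
    set L := ⋃ k, P k with hL
    have hLconn : IsPreconnected L := IsPreconnected.iUnion_of_chain hPconn hchain
    have hLsub : L ⊆ Icc (0:ℝ) 1 := by
      refine iUnion_subset fun k => ?_
      rintro t ⟨y, hy, rfl⟩
      exact hmaps.iterate _ (hJ hy)
    have hKL : K ⊆ L := by
      have : K = P 0 := by rw [hP]; simp [hK]
      rw [this]; exact subset_iUnion P 0
    have hLne : L.Nonempty := ⟨w, hKL ⟨y0, hy0, hwy0⟩⟩
    have hbddb : BddBelow L := BddBelow.mono hLsub (bddBelow_Icc)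
    have hbdda : BddAbove L := BddAbove.mono hLsub (bddAbove_Icc)
    set c := sInf L with hc
    set d := sSup L with hd
    have hLcd : L ⊆ Icc c d := fun t ht => ⟨csInf_le hbddb ht, le_csSup hbdda ht⟩
    obtain ⟨u, hu, v, hv, huv⟩ := hKnt
    have hucd : u ∈ Icc c d := hLcd (hKL hu)
    have hvcd : v ∈ Icc c d := hLcd (hKL hv)
    have hcdlt : c < d := by
      rcases lt_or_gt_of_ne huv with h | h
      · exact lt_of_le_of_lt hucd.1 (lt_of_lt_of_le h hvcd.2)
      · exact lt_of_le_of_lt hvcd.1 (lt_of_lt_of_le h hucd.2)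
    have h0c : (0:ℝ) ≤ c := le_csInf hLne fun t ht => (hLsub ht).1
    have h1d : d ≤ 1 := csSup_le hLne fun t ht => (hLsub ht).2
    have hcd01 : Icc c d ⊆ Icc (0:ℝ) 1 := Icc_subset_Icc h0c h1d
    have hOrd : L.OrdConnected := hLconn.ordConnected
    have hIoo : Ioo c d ⊆ L := by
      intro t ht
      obtain ⟨t1, ht1, ht1'⟩ := exists_lt_of_csInf_lt hLne ht.1
      obtain ⟨t2, ht2, ht2'⟩ := exists_lt_of_lt_csSup hLne ht.2
      exact hOrd.out ht1 ht2 ⟨le_of_lt ht1', le_of_lt ht2'⟩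
    have hclo : closure L = Icc c d := by
      refine le_antisymm (isClosed_Icc.closure_subset_iff.mpr hLcd) ?_
      rw [← closure_Ioo hcdlt.ne]
      exact closure_mono hIoo
    set g := f^[p] with hg
    have hgL : ∀ t ∈ L, g t ∈ L := by
      intro t ht
      obtain ⟨Pk, ⟨k, rfl⟩, htk⟩ := ht
      obtain ⟨y, hy, rfl⟩ := htk
      refine mem_iUnion.mpr ⟨k + 1, ⟨y, hy, ?_⟩⟩
      have he : m + (k + 1) * p = p + (m + k * p) := by rw [Nat.add_mul, Nat.one_mul]; omega
      rw [he, Function.iterate_add_apply]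
    have hgcont : ContinuousOn g (Icc c d) := (contOn_iterate hf hmaps p).mono hcd01
    have hmapg : MapsTo g (Icc c d) (Icc c d) := by
      intro t ht
      have ht' : t ∈ closure L := by rw [hclo]; exact ht
      have h1 : g t ∈ g '' closure L := mem_image_of_mem _ ht'
      have h2 : g '' closure L ⊆ closure (g '' L) :=
        ContinuousOn.image_closure (by rw [hclo]; exact hgcont)
      have h3 : closure (g '' L) ⊆ closure L := by
        refine closure_mono ?_
        rintro _ ⟨t', ht', rfl⟩
        exact hgL t' ht'
      have := h3 (h2 h1)
      rwa [hclo] at this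
    have hfixg : ∀ t ∈ Ioo c d, g t ≠ t := by
      intro t ht hgt
      obtain ⟨Pk, ⟨k, rfl⟩, htk⟩ := hIoo ht
      obtain ⟨y, hy, hty⟩ := htk
      have ht01 : t ∈ Icc (0:ℝ) 1 := hLsub (hIoo ht)
      obtain ⟨q, hq1, hq2, hq3⟩ := tendsToCycle_of_periodic hf hmaps ht01 hp hgt
      refine hJZ y hy ⟨q, hq1, hq2, ?_⟩
      rw [← omegaSet_iterate f y (m + k * p), hty, hq3]
    -- pick a point of K in the open interval
    have hKord : K.OrdConnected := (isPreconnected_Icc.image _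
      ((contOn_iterate hf hmaps m).mono hJ) : IsPreconnected K).ordConnected
    have hxK : (u + v) / 2 ∈ K := by
      refine hKord.uIcc_subset hu hv ?_
      rcases le_total u v with h | h
      · rw [uIcc_of_le h]; exact ⟨by linarith, by linarith⟩
      · rw [uIcc_of_ge h]; exact ⟨by linarith, by linarith⟩
    have hxIoo : (u + v) / 2 ∈ Ioo c d := by
      rcases lt_or_gt_of_ne huv with h | h
      · exact ⟨lt_of_le_of_lt hucd.1 (by linarith), lt_of_lt_of_le (by linarith) hvcd.2⟩
      · exact ⟨lt_of_le_of_lt hvcd.1 (by linarith), lt_of_lt_of_le (by linarith) hucd.2⟩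
    obtain ⟨y, hy, hxy⟩ := hxK
    obtain ⟨ℓ, hℓmem, hgℓ, htendx⟩ :=
      converges_of_no_interior_fixed hcdlt hgcont hmapg hfixg (Ioo_subset_Icc_self hxIoo)
    have he : ∀ k : ℕ, g^[k] ((u + v) / 2) = f^[m + k * p] y := by
      intro k
      rw [← hxy, ← Function.iterate_mul, ← Function.iterate_add_apply,
        show p * k + m = m + k * p by rw [Nat.mul_comm]; omega]
    have htendy : Tendsto (fun k : ℕ => f^[m + k * p] y) atTop (nhds ℓ) :=
      htendx.congr he
    exact hJZ y hy (tendsToCycle_of_tendsto hf hmaps (hJ hy) hp (hcd01 hℓmem) hgℓ htendy)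

theorem stmt_4 (f : ℝ → ℝ) (hf : ContinuousOn f (Icc 0 1))
    (hmaps : MapsTo f (Icc 0 1) (Icc 0 1)) :
    (∀ J : Set ℝ, ¬ WanderingInterval f J) ↔
      Icc (0:ℝ) 1 ⊆ closure {x ∈ Icc (0:ℝ) 1 | TendsToCycle f x} := by
  constructor
  · intro hnw x0 hx0
    by_contra hx0c
    rw [Metric.mem_closure_iff] at hx0c
    push_neg at hx0c
    obtain ⟨ε, hε, hsep⟩ := hx0c
    set a := max 0 (x0 - ε / 2) with ha
    set b := min 1 (x0 + ε / 2) with hb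
    have hab : a < b := by
      apply max_lt
      · exact lt_min one_pos (by linarith [hx0.1])
      · exact lt_min (by linarith [hx0.2]) (by linarith)
    have hJ01 : Icc a b ⊆ Icc (0:ℝ) 1 := fun t ht =>
      ⟨le_trans (le_max_left _ _) ht.1, le_trans ht.2 (min_le_left _ _)⟩
    have hJZ : ∀ t ∈ Icc a b, ¬ TendsToCycle f t := by
      intro t ht htc
      have h1 : x0 - ε / 2 ≤ t := le_trans (le_max_right _ _) ht.1
      have h2 : t ≤ x0 + ε / 2 := le_trans ht.2 (min_le_right _ _)
      have h3 := hsep t ⟨hJ01 ht, htc⟩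
      rw [Real.dist_eq] at h3
      have h4 : |x0 - t| ≤ ε / 2 := abs_le.mpr ⟨by linarith, by linarith⟩
      linarith
    by_cases hdisj : ∀ m n : ℕ, m < n → Disjoint (f^[m] '' Icc a b) (f^[n] '' Icc a b)
    · exact hnw (Icc a b) ⟨hJ01, ordConnected_Icc, ⟨a, ⟨le_refl a, hab.le⟩, b, ⟨hab.le, le_refl b⟩, hab.ne⟩, hdisj, hJZ⟩
    · push_neg at hdisj
      obtain ⟨m, n, hmn, hnd⟩ := hdisj
      exact no_overlap hf hmaps hab hJ01 hJZ hmn (not_disjoint_iff_nonempty_inter.mp hnd)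
  · intro hdense J hJw
    obtain ⟨hsub, hord, hnt, hdisj, hnz⟩ := hJw
    obtain ⟨u, hu, v, hv, huv⟩ := hnt
    set t := (u + v) / 2 with htdef
    have htJ : t ∈ J := by
      refine hord.uIcc_subset hu hv ?_
      rcases le_total u v with h | h
      · rw [uIcc_of_le h]; exact ⟨by linarith, by linarith⟩
      · rw [uIcc_of_ge h]; exact ⟨by linarith, by linarith⟩
    have htc := hdense (hsub htJ)
    rw [Metric.mem_closure_iff] at htc
    have hr : 0 < |u - v| / 2 := by
      have : u - v ≠ 0 := sub_ne_zero.mpr huv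
      positivity
    obtain ⟨z, hz, hdist⟩ := htc _ hr
    rw [Real.dist_eq] at hdist
    have hzJ : z ∈ J := by
      refine hord.uIcc_subset hu hv ?_
      rcases le_total u v with h | h
      · rw [uIcc_of_le h]
        rw [abs_of_nonpos (by linarith : u - v ≤ 0)] at hdist
        have := abs_lt.mp hdist
        constructor <;> [linarith [this.2]; linarith [this.1]]
      · rw [uIcc_of_ge h]
        rw [abs_of_nonneg (by linarith : 0 ≤ u - v)] at hdist
        have := abs_lt.mp hdist
        constructor <;> [linarith [this.2]; linarith [this.1]]
    exact hnz z hzJ hz.2
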